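/- Let Γ be a commutative thick weakly distance-regular digraph in which C(q) exists. Then any circuit of length q containing an arc of type (1,q-1) consists entirely of arcs of types (1,q-1) and (1,q-2). -/
import Mathlib


/-!
Common framework: commutative thick weakly distance-regular digraphs.
-/

variable {V : Type*}

/-- There is a directed walk of length `n` from `x` to `y`. -/
def HasWalk (adj : V → V → Prop) (x y : V) (n : ℕ) : Prop :=
  ∃ f : ℕ → V, f 0 = x ∧ f n = y ∧ ∀ i < n, adj (f i) (f (i + 1))

/-- Directed distance `∂(x,y)`. -/
noncomputable def ddist (adj : V → V → Prop) (x y : V) : ℕ :=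
  sInf {n | HasWalk adj x y n}

/-- Two-way distance `∂̃(x,y) = (∂(x,y), ∂(y,x))`. -/
noncomputable def tdist (adj : V → V → Prop) (x y : V) : ℕ × ℕ :=
  (ddist adj x y, ddist adj y x)

/-- The pair `i` is an attained two-way distance, i.e. `i ∈ ∂̃(Γ)`. -/
def Attained (adj : V → V → Prop) (i : ℕ × ℕ) : Prop :=
  ∃ x y : V, tdist adj x y = i

/-- Intersection number `p^h_{i,j}`: for attained `h` it is the common cardinality of
`{z | ∂̃(x,z) = i, ∂̃(z,y) = j}` over pairs with `∂̃(x,y) = h` (and `0` otherwise). -/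
noncomputable def pnum (adj : V → V → Prop) (h i j : ℕ × ℕ) : ℕ :=
  sSup {n | ∃ x y : V, tdist adj x y = h ∧
    n = Set.ncard {z : V | tdist adj x z = i ∧ tdist adj z y = j}}

/-- Valency `k_i = |Γ_i(x)|`. -/
noncomputable def kval (adj : V → V → Prop) (i : ℕ × ℕ) : ℕ :=
  pnum adj (0, 0) i i.swap

/-- Adjacency of the subdigraph `Δ_J`: arcs of type `(1, t-1)` for `t ∈ J`. -/
def deltaAdj (adj : V → V → Prop) (J : Set ℕ) (u v : V) : Prop :=
  ∃ t ∈ J, tdist adj u v = (1, t - 1)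

/-- A circuit of length `s`. -/
def IsCircuit (adj : V → V → Prop) (s : ℕ) (f : ℕ → V) : Prop :=
  0 < s ∧ f s = f 0 ∧ ∀ i < s, adj (f i) (f (i + 1))

/-- Strongly connected. -/
def IsStrong (adj : V → V → Prop) : Prop :=
  ∀ x y : V, ∃ n, HasWalk adj x y n

/-- Weakly distance-regular: the intersection numbers are well defined. -/
def IsWDR (adj : V → V → Prop) : Prop :=
  ∀ (i j : ℕ × ℕ) (x y x' y' : V), tdist adj x y = tdist adj x' y' →
    Set.ncard {z : V | tdist adj x z = i ∧ tdist adj z y = j}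
      = Set.ncard {z : V | tdist adj x' z = i ∧ tdist adj z y' = j}

/-- Thick: `p^h_{i,i}, p^h_{i,i*} ∈ {0, k_i}`. -/
def IsThick (adj : V → V → Prop) : Prop :=
  ∀ h i : ℕ × ℕ,
    (pnum adj h i i = 0 ∨ pnum adj h i i = kval adj i) ∧
    (pnum adj h i i.swap = 0 ∨ pnum adj h i i.swap = kval adj i)

/-- A thick weakly distance-regular digraph (as a property of an adjacency relation). -/
def IsWDRThick (adj : V → V → Prop) : Prop :=
  IsStrong adj ∧ IsWDR adj ∧ IsThick adj

/-- A commutative thick weakly distance-regular digraph. -/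
structure CTWDR (V : Type*) [Fintype V] where
  adj : V → V → Prop
  loopless : ∀ v, ¬ adj v v
  strong : IsStrong adj
  wdr : IsWDR adj
  comm : ∀ (i j : ℕ × ℕ) (x y : V),
    Set.ncard {z : V | tdist adj x z = i ∧ tdist adj z y = j}
      = Set.ncard {z : V | tdist adj x z = j ∧ tdist adj z y = i}
  thick : IsThick adj

namespace CTWDR

variable {V : Type*} [Fintype V] (G : CTWDR V)

/-- Product `EF` of two sets of relations (relations identified with two-way distances). -/
def prodS (E F : Set (ℕ × ℕ)) : Set (ℕ × ℕ) :=
  {h | ∃ i ∈ E, ∃ j ∈ F, pnum G.adj h i j ≠ 0}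

/-- Powers `Γ_i^l` (with `Γ_i^0 = {Γ_{(0,0)}}` and `Γ_i^1 = {Γ_i}`). -/
def pow (i : ℕ × ℕ) : ℕ → Set (ℕ × ℕ)
  | 0 => {(0, 0)}
  | 1 => {i}
  | n + 2 => G.prodS (pow i (n + 1)) {i}

/-- The pair `(1, s-1)` is pure: every circuit of length `s` containing an arc of type
`(1, s-1)` consists of arcs of type `(1, s-1)`. -/
def Pure (s : ℕ) : Prop :=
  ∀ f : ℕ → V, IsCircuit G.adj s f →
    (∃ i < s, tdist G.adj (f i) (f (i + 1)) = (1, s - 1)) →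
    ∀ i < s, tdist G.adj (f i) (f (i + 1)) = (1, s - 1)

/-- `(1, s-1)` is mixed. -/
def Mixed (s : ℕ) : Prop := ¬ G.Pure s

/-- Configuration `C(q)` exists. -/
def Cexists (q : ℕ) : Prop :=
  pnum G.adj (1, q - 2) (1, q - 1) (1, q - 1) ≠ 0 ∧ G.Pure (q - 1)

/-- Configuration `D(q)` exists. -/
def Dexists (q : ℕ) : Prop :=
  pnum G.adj (1, q - 1) (1, q - 2) (q - 2, 1) ≠ 0 ∧ G.Pure (q - 1)

/-- A closed set of relations: `Γ_{i*}Γ_j ⊆ F` for all `i, j ∈ F`. -/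
def Closed (F : Set (ℕ × ℕ)) : Prop :=
  ∀ i ∈ F, ∀ j ∈ F, G.prodS {i.swap} {j} ⊆ F

/-- The minimal closed set `⟨F⟩` containing `F`. -/
def genClosed (F : Set (ℕ × ℕ)) : Set (ℕ × ℕ) :=
  ⋂₀ {C | F ⊆ C ∧ G.Closed C}

/-- The block `F_J(x)` of the closed set generated by `{Γ_{1,t-1}}_{t ∈ J}`. -/
def block (J : Set ℕ) (x : V) : Set V :=
  {y | tdist G.adj x y ∈ G.genClosed {i | ∃ t ∈ J, i = (1, t - 1)}}

end CTWDR

section Walks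

variable {V : Type*} {adj : V → V → Prop}

lemma hasWalk_refl (x : V) : HasWalk adj x x 0 :=
  ⟨fun _ => x, rfl, rfl, fun i hi => absurd hi (Nat.not_lt_zero i)⟩

lemma hasWalk_single {x y : V} (h : adj x y) : HasWalk adj x y 1 :=
  ⟨fun n => if n = 0 then x else y, by simp, by simp, by
    intro i hi
    interval_cases i
    simpa using h⟩

lemma hasWalk_concat {x y z : V} {m n : ℕ} (h1 : HasWalk adj x y m)
    (h2 : HasWalk adj y z n) : HasWalk adj x z (m + n) := by
  obtain ⟨f, hf0, hfm, hf⟩ := h1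
  obtain ⟨g, hg0, hgn, hg⟩ := h2
  refine ⟨fun i => if i < m then f i else g (i - m), ?_, ?_, ?_⟩
  · rcases Nat.eq_zero_or_pos m with hm | hm
    · have hxy : y = x := by rw [← hf0, ← hfm, hm]
      simp [hm, hg0, hxy]
    · simp [hm, hf0]
  · have : ¬ m + n < m := by omega
    simp [this, hgn]
  · intro i hi
    rcases lt_trichotomy (i + 1) m with h | h | h
    · have : i < m := by omega
      simp only [this, h, if_true]
      exact hf i this
    · have him : i < m := by omega
      have : ¬ (i + 1 < m) := by omega
      simp only [him, this, if_true, if_false, h, Nat.sub_self, lt_irrefl]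
      rw [hg0, ← hfm, ← h]
      exact hf i him
    · have h1' : ¬ i < m := by omega
      have h2' : ¬ i + 1 < m := by omega
      simp only [h1', h2', if_false]
      have : i + 1 - m = (i - m) + 1 := by omega
      rw [this]
      exact hg (i - m) (by omega)

end Walks

theorem tst : True := trivial

section Dist

variable {V : Type*} {adj : V → V → Prop}

lemma ddist_le {x y : V} {n : ℕ} (h : HasWalk adj x y n) : ddist adj x y ≤ n :=
  Nat.sInf_le h

lemma walk_ddist (hs : IsStrong adj) (x y : V) : HasWalk adj x y (ddist adj x y) :=
  Nat.sInf_mem (hs x y)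

lemma ddist_triangle (hs : IsStrong adj) (x y z : V) :
    ddist adj x z ≤ ddist adj x y + ddist adj y z :=
  ddist_le (hasWalk_concat (walk_ddist hs x y) (walk_ddist hs y z))

lemma ddist_self (x : V) : ddist adj x x = 0 :=
  Nat.le_zero.mp (ddist_le (hasWalk_refl x))

lemma eq_of_ddist_eq_zero (hs : IsStrong adj) {x y : V} (h : ddist adj x y = 0) : x = y := by
  have hw := walk_ddist hs x y
  rw [h] at hw
  obtain ⟨f, h0, h1, _⟩ := hw
  rw [← h0, h1]

lemma adj_of_ddist_eq_one (hs : IsStrong adj) {x y : V} (h : ddist adj x y = 1) : adj x y := by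
  have hw := walk_ddist hs x y
  rw [h] at hw
  obtain ⟨f, h0, h1, ha⟩ := hw
  have := ha 0 (by omega)
  rwa [h0, h1] at this

lemma ddist_eq_one (hl : ∀ v, ¬ adj v v) {x y : V} (h : adj x y) : ddist adj x y = 1 := by
  have h1 : ddist adj x y ≤ 1 := ddist_le (hasWalk_single h)
  have h0 : ddist adj x y ≠ 0 := by
    intro h0
    have hxy : x = y := by
      have : (0 : ℕ) ∈ {n | HasWalk adj x y n} := by
        rw [← h0]; exact Nat.sInf_mem ⟨1, hasWalk_single h⟩
      obtain ⟨f, hf0, hf1, _⟩ := this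
      rw [← hf0, hf1]
    exact hl y (hxy ▸ h)
  omega

lemma tdist_self (x : V) : tdist adj x x = (0, 0) := by
  simp [tdist, ddist_self]

lemma tdist_swap (x y : V) : tdist adj y x = (tdist adj x y).swap := rfl

lemma tdist_eq_iff {x y : V} {p : ℕ × ℕ} :
    tdist adj x y = p ↔ ddist adj x y = p.1 ∧ ddist adj y x = p.2 := by
  rw [tdist, Prod.ext_iff]

end Dist

section Pnum

variable {V : Type*} [Fintype V] (G : CTWDR V)

/-- The mid-set. -/
private def mids (x y : V) (a b : ℕ × ℕ) : Set V :=
  {z : V | tdist G.adj x z = a ∧ tdist G.adj z y = b}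

lemma pnum_eq {g a b : ℕ × ℕ} {x y : V} (hg : tdist G.adj x y = g) :
    pnum G.adj g a b = (mids G x y a b).ncard := by
  have hset : {n | ∃ x' y' : V, tdist G.adj x' y' = g ∧
      n = Set.ncard {z : V | tdist G.adj x' z = a ∧ tdist G.adj z y' = b}}
      = {(mids G x y a b).ncard} := by
    ext n
    simp only [Set.mem_setOf_eq, Set.mem_singleton_iff]
    constructor
    · rintro ⟨x', y', hg', rfl⟩
      exact (G.wdr a b x' y' x y (hg'.trans hg.symm)).symm ▸ rfl
    · rintro rfl
      exact ⟨x, y, hg, rfl⟩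
  rw [pnum, hset, csSup_singleton]

lemma pnum_ne_zero_of_mem {g a b : ℕ × ℕ} {x y z : V} (hg : tdist G.adj x y = g)
    (h1 : tdist G.adj x z = a) (h2 : tdist G.adj z y = b) : pnum G.adj g a b ≠ 0 := by
  rw [pnum_eq G hg]
  intro h0
  have : mids G x y a b = ∅ := (Set.ncard_eq_zero (Set.toFinite _)).mp h0
  exact absurd (this ▸ (⟨h1, h2⟩ : z ∈ mids G x y a b)) (Set.notMem_empty z)

lemma exists_of_pnum_ne_zero {g a b : ℕ × ℕ} {x y : V} (h : pnum G.adj g a b ≠ 0)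
    (hg : tdist G.adj x y = g) : ∃ z, tdist G.adj x z = a ∧ tdist G.adj z y = b := by
  rw [pnum_eq G hg] at h
  obtain ⟨z, hz⟩ := Set.nonempty_of_ncard_ne_zero h
  exact ⟨z, hz.1, hz.2⟩

lemma anchor_of_pnum_ne_zero {g a b : ℕ × ℕ} (h : pnum G.adj g a b ≠ 0) :
    ∃ x y z : V, tdist G.adj x y = g ∧ tdist G.adj x z = a ∧ tdist G.adj z y = b := by
  have hS : {n | ∃ x y : V, tdist G.adj x y = g ∧
      n = Set.ncard {z : V | tdist G.adj x z = a ∧ tdist G.adj z y = b}}.Nonempty := by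
    by_contra hne
    rw [Set.not_nonempty_iff_eq_empty] at hne
    rw [pnum, hne] at h
    simp at h
  obtain ⟨n, x, y, hg, _⟩ := hS
  obtain ⟨z, hz1, hz2⟩ := exists_of_pnum_ne_zero G h hg
  exact ⟨x, y, z, hg, hz1, hz2⟩

lemma pnum_comm (g a b : ℕ × ℕ) : pnum G.adj g a b = pnum G.adj g b a := by
  unfold pnum
  congr 1
  ext n
  simp only [Set.mem_setOf_eq]
  constructor
  · rintro ⟨x, y, hg, rfl⟩
    exact ⟨x, y, hg, G.comm a b x y⟩
  · rintro ⟨x, y, hg, rfl⟩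
    exact ⟨x, y, hg, G.comm b a x y⟩

lemma kval_eq (a : ℕ × ℕ) (x : V) :
    kval G.adj a = ({z : V | tdist G.adj x z = a}).ncard := by
  rw [kval, pnum_eq G (tdist_self x)]
  congr 1
  ext z
  simp only [mids, Set.mem_setOf_eq]
  exact ⟨fun h => h.1, fun h => ⟨h, h ▸ rfl⟩⟩

/-- The key transfer lemma from thickness. -/
lemma transfer {g a : ℕ × ℕ} {x y w : V} (hp : pnum G.adj g a a ≠ 0)
    (hg : tdist G.adj x y = g) (hw : tdist G.adj x w = a) : tdist G.adj w y = a := by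
  have hk : pnum G.adj g a a = kval G.adj a := (G.thick g a).1.resolve_left hp
  have h1 : pnum G.adj g a a = (mids G x y a a).ncard := pnum_eq G hg
  have h2 : kval G.adj a = ({z : V | tdist G.adj x z = a}).ncard := kval_eq G a x
  have hsub : mids G x y a a ⊆ {z : V | tdist G.adj x z = a} := fun z hz => hz.1
  have hle : ({z : V | tdist G.adj x z = a}).ncard ≤ (mids G x y a a).ncard := by
    rw [← h1, hk, h2]
  have : mids G x y a a = {z : V | tdist G.adj x z = a} :=
    Set.eq_of_subset_of_ncard_le hsub hle (Set.toFinite _)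
  have hwm : w ∈ mids G x y a a := this ▸ hw
  exact hwm.2

end Pnum

section Cq

variable {V : Type*} [Fintype V] (G : CTWDR V) {q : ℕ}

/-- Purity applied to an h-pair (a,b) and a walk of length q-2 from b to a. -/
lemma pur (hpure : G.Pure (q - 1)) (hq : 4 ≤ q) {a b : V}
    (hab : tdist G.adj a b = (1, q - 2)) {g : ℕ → V} (hg0 : g 0 = b)
    (hgL : g (q - 2) = a) (hga : ∀ s < q - 2, G.adj (g s) (g (s + 1))) :
    ∀ s < q - 2, tdist G.adj (g s) (g (s + 1)) = (1, q - 2) := by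
  have hadj_ab : G.adj a b := by
    apply adj_of_ddist_eq_one G.strong
    exact (tdist_eq_iff.mp hab).1
  set F : ℕ → V := fun n => if n = 0 then a else g (n - 1) with hF
  have hcir : IsCircuit G.adj (q - 1) F := by
    refine ⟨by omega, ?_, ?_⟩
    · have h1 : q - 1 ≠ 0 := by omega
      have h2 : q - 1 - 1 = q - 2 := by omega
      simp [hF, h1, h2, hgL]
    · intro i hi
      rcases Nat.eq_zero_or_pos i with rfl | hpos
      · simpa [hF, hg0] using hadj_ab
      · have h1 : i ≠ 0 := by omega
        have h2 : i + 1 ≠ 0 := by omega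
        have h3 : i + 1 - 1 = (i - 1) + 1 := by omega
        simp only [hF, h1, h2, if_false, h3]
        exact hga (i - 1) (by omega)
  have hq2 : q - 1 - 1 = q - 2 := by omega
  have hall := hpure F hcir ⟨0, by omega, by simpa [hF, hg0, hq2] using hab⟩
  intro s hs
  have := hall (s + 1) (by omega)
  have h1 : s + 1 ≠ 0 := by omega
  have h2 : s + 1 + 1 - 1 = s + 1 := by omega
  simpa [hF, h1, h2, hq2] using this

variable (hC : G.Cexists q) (hq : 4 ≤ q)

include hC in
/-- The anchor configuration from C(q). -/
lemma anchor : ∃ x m y : V, tdist G.adj x m = (1, q - 1) ∧ tdist G.adj m y = (1, q - 1) ∧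
    tdist G.adj x y = (1, q - 2) := by
  obtain ⟨x, y, z, h1, h2, h3⟩ := anchor_of_pnum_ne_zero G hC.1
  exact ⟨x, z, y, h2, h3, h1⟩

include hC in
/-- Companion: for every i-pair (a,b) there is y with a→y of type h and b→y of type i. -/
lemma compA {a b : V} (hab : tdist G.adj a b = (1, q - 1)) :
    ∃ y, tdist G.adj a y = (1, q - 2) ∧ tdist G.adj b y = (1, q - 1) := by
  obtain ⟨x, m, y, hxm, hmy, hxy⟩ := anchor G hC
  have hp : pnum G.adj (1, q - 1) (1, q - 2) (Prod.swap (1, q - 1)) ≠ 0 := by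
    apply pnum_ne_zero_of_mem G hxm hxy
    rw [tdist_swap, hmy]
  obtain ⟨z, hz1, hz2⟩ := exists_of_pnum_ne_zero G hp hab
  refine ⟨z, hz1, ?_⟩
  rw [tdist_swap] at hz2
  exact Prod.swap_injective (by simpa using hz2)

include hC hq in
/-- Key lemma: pnum h2 i h ≠ 0, i.e. some (2,q-2)-pair has an (i,h)-mid. -/
lemma h2ih : pnum G.adj (2, q - 2) (1, q - 1) (1, q - 2) ≠ 0 := by
  obtain ⟨x, m, y, hxm, hmy, hxy⟩ := anchor G hC
  -- geodesic from y to x of length q-2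
  have hyx : ddist G.adj y x = q - 2 := (tdist_eq_iff.mp hxy).2
  obtain ⟨g, hg0, hgL, hga⟩ : HasWalk G.adj y x (q - 2) := hyx ▸ walk_ddist G.strong y x
  have hpure := pur G hC.2 hq hxy hg0 hgL hga
  set c := g 1 with hc
  have hyc : tdist G.adj y (g 1) = (1, q - 2) := by
    have := hpure 0 (by omega)
    rwa [hg0] at this
  -- d(c, x) ≤ q - 3 via the rest of the walk
  have hcx : ddist G.adj (g 1) x ≤ q - 3 := by
    apply ddist_le (n := q - 3)
    refine ⟨fun s => g (1 + s), rfl, by show g (1 + (q-3)) = x; rw [show 1 + (q-3) = q - 2 by omega, hgL], ?_⟩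
    intro s hs
    have := hga (1 + s) (by omega)
    rwa [show 1 + s + 1 = 1 + (s+1) by omega] at this
  -- distances
  have hdxm : ddist G.adj x m = 1 := (tdist_eq_iff.mp hxm).1
  have hdmy : ddist G.adj m y = 1 := (tdist_eq_iff.mp hmy).1
  have hdym : ddist G.adj y m = q - 1 := (tdist_eq_iff.mp hmy).2
  have hdyc : ddist G.adj y (g 1) = 1 := (tdist_eq_iff.mp hyc).1
  -- d(c, m) = q - 2
  have hcm_le : ddist G.adj (g 1) m ≤ q - 2 := by
    calc ddist G.adj (g 1) m ≤ ddist G.adj (g 1) x + ddist G.adj x m :=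
          ddist_triangle G.strong _ _ _
    _ ≤ (q - 3) + 1 := by omega
    _ = q - 2 := by omega
  have hcm_ge : q - 2 ≤ ddist G.adj (g 1) m := by
    have := ddist_triangle G.strong y (g 1) m
    omega
  have hcm : ddist G.adj (g 1) m = q - 2 := le_antisymm hcm_le hcm_ge
  -- d(m, c) = 2
  have hmc_le : ddist G.adj m (g 1) ≤ 2 := by
    have := ddist_triangle G.strong m y (g 1)
    omega
  have hmc_ne0 : ddist G.adj m (g 1) ≠ 0 := by
    intro h0
    have := eq_of_ddist_eq_zero G.strong h0
    rw [← this] at hcm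
    rw [ddist_self] at hcm
    omega
  have hmc_ne1 : ddist G.adj m (g 1) ≠ 1 := by
    intro h1
    have hmch : tdist G.adj m (g 1) = (1, q - 2) := tdist_eq_iff.mpr ⟨h1, hcm⟩
    have hym : tdist G.adj m y = (1, q - 1) := hmy
    have := transfer G hC.1 hmch hym
    rw [hyc] at this
    have : q - 2 = q - 1 := by
      have := (Prod.ext_iff.mp this).2
      simpa using this
    omega
  have hmc : ddist G.adj m (g 1) = 2 := by omega
  exact pnum_ne_zero_of_mem G (tdist_eq_iff.mpr ⟨hmc, hcm⟩) hmy hyc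

end Cq

section Main

variable {V : Type*} [Fintype V] (G : CTWDR V) {q : ℕ}

lemma walkP {P : ℕ → V} (hadjP : ∀ t, G.adj (P t) (P (t + 1))) (u l : ℕ) :
    HasWalk G.adj (P u) (P (u + l)) l := by
  induction l with
  | zero => exact hasWalk_refl _
  | succ n ihn =>
      have := hasWalk_concat ihn (hasWalk_single (hadjP (u + n)))
      rwa [show u + n + 1 = u + (n + 1) by omega] at this

lemma main_lemma (hC : G.Cexists q) (hq : 4 ≤ q) (P : ℕ → V)
    (hadjP : ∀ t, G.adj (P t) (P (t + 1))) (hperP : ∀ t, P (t + q) = P t)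
    (h0 : tdist G.adj (P 0) (P 1) = (1, q - 1)) :
    ∀ t, t < q → tdist G.adj (P t) (P (t + 1)) = (1, q - 1) ∨
      tdist G.adj (P t) (P (t + 1)) = (1, q - 2) := by
  have hstep : ∀ t, ddist G.adj (P t) (P (t + 1)) = 1 :=
    fun t => ddist_eq_one G.loopless (hadjP t)
  have hne : ∀ t, P t ≠ P (t + 1) := by
    intro t h
    exact G.loopless (P (t + 1)) (h ▸ hadjP t)
  intro t
  induction t using Nat.strong_induction_on with
  | _ t IH =>
    intro ht
    match t with
    | 0 => exact Or.inl h0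
    | Nat.succ s =>
      have hIH := IH s (by omega) (by omega)
      set a := P s with ha
      set b := P (s + 1) with hb
      set c := P (s + 2) with hc
      -- basic distances
      have dab : ddist G.adj a b = 1 := hstep s
      have dbc : ddist G.adj b c = 1 := hstep (s + 1)
      have dca_le : ddist G.adj c a ≤ q - 2 := by
        have hw := walkP G hadjP (s + 2) (q - 2)
        rw [show s + 2 + (q - 2) = s + q by omega, hperP s] at hw
        exact ddist_le hw
      have dcb_le : ddist G.adj c b ≤ q - 1 := by
        have hw := walkP G hadjP (s + 2) (q - 1)
        rw [show s + 2 + (q - 1) = (s + 1) + q by omega, hperP (s + 1)] at hw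
        exact ddist_le hw
      have dcb_pos : 1 ≤ ddist G.adj c b := by
        rcases Nat.eq_zero_or_pos (ddist G.adj c b) with h0' | h
        · exact absurd (eq_of_ddist_eq_zero G.strong h0').symm (hne (s + 1))
        · exact h
      rcases hIH with hab | hab
      · -- previous arc of type i = (1, q-1)
        have dba : ddist G.adj b a = q - 1 := (tdist_eq_iff.mp hab).2
        have dca : ddist G.adj c a = q - 2 := by
          have := ddist_triangle G.strong b c a
          omega
        have dac_le : ddist G.adj a c ≤ 2 := by
          have := ddist_triangle G.strong a b c
          omega
        have dac_pos : 1 ≤ ddist G.adj a c := by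
          rcases Nat.eq_zero_or_pos (ddist G.adj a c) with h0' | h
          · have : a = c := eq_of_ddist_eq_zero G.strong h0'
            rw [← this, ddist_self] at dca
            omega
          · exact h
        have hcases : ddist G.adj a c = 1 ∨ ddist G.adj a c = 2 := by omega
        rcases hcases with dac | dac
        · -- h-pair (a,c): transfer types (b,c) as i
          have hac : tdist G.adj a c = (1, q - 2) := tdist_eq_iff.mpr ⟨dac, dca⟩
          exact Or.inl (transfer G hC.1 hac hab)
        · -- h2-pair (a,c)
          have hac : tdist G.adj a c = (2, q - 2) := tdist_eq_iff.mpr ⟨dac, dca⟩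
          have hr : q - 2 ≤ ddist G.adj c b := by
            by_contra hr
            push_neg at hr
            obtain ⟨y, hay, hby⟩ := compA G hC hab
            have hp2 : pnum G.adj (2, q - 2) (1, q - 2) (1, q - 1) ≠ 0 := by
              rw [pnum_comm]
              exact h2ih G hC hq
            obtain ⟨u, hau, huc⟩ := exists_of_pnum_ne_zero G hp2 hac
            have hbu : tdist G.adj b u = (1, q - 1) := transfer G hC.1 hau hab
            have hbc : tdist G.adj b c = (1, ddist G.adj c b) := tdist_eq_iff.mpr ⟨dbc, rfl⟩
            have hp3 : pnum G.adj (1, ddist G.adj c b) (1, q - 1) (1, q - 1) ≠ 0 :=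
              pnum_ne_zero_of_mem G hbc hbu huc
            have hyc : tdist G.adj y c = (1, q - 1) := transfer G hp3 hbc hby
            have dyc : ddist G.adj y c = 1 := (tdist_eq_iff.mp hyc).1
            have dyb : ddist G.adj y b = q - 1 := (tdist_eq_iff.mp hby).2
            have := ddist_triangle G.strong y c b
            omega
          have : ddist G.adj c b = q - 2 ∨ ddist G.adj c b = q - 1 := by omega
          rcases this with h' | h'
          · exact Or.inr (tdist_eq_iff.mpr ⟨dbc, h'⟩)
          · exact Or.inl (tdist_eq_iff.mpr ⟨dbc, h'⟩)
      · -- previous arc of type h = (1, q-2)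
        have hs1 : 1 ≤ s := by
          rcases Nat.eq_zero_or_pos s with rfl | h
          · exfalso
            have hh : ((1 : ℕ), q - 1) = ((1 : ℕ), q - 2) := h0.symm.trans hab
            have := (Prod.ext_iff.mp hh).2
            simp only at this
            omega
          · exact h
        have dba : ddist G.adj b a = q - 2 := (tdist_eq_iff.mp hab).2
        have dca_ge : q - 3 ≤ ddist G.adj c a := by
          have := ddist_triangle G.strong b c a
          omega
        have hcases : ddist G.adj c a = q - 3 ∨ ddist G.adj c a = q - 2 := by omega
        rcases hcases with dca | dca
        · -- purity: walk b → c → ... → a of length q-2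
          obtain ⟨w, hw0, hwL, hwa⟩ : HasWalk G.adj c a (q - 3) := dca ▸ walk_ddist G.strong c a
          set W : ℕ → V := fun n => if n = 0 then b else w (n - 1) with hW
          have hpur := pur G hC.2 hq hab (g := W) (by simp [hW]) ?wL ?wadj
          case wL =>
            have h1 : q - 2 ≠ 0 := by omega
            have h2 : q - 2 - 1 = q - 3 := by omega
            simp [hW, h1, h2, hwL]
          case wadj =>
            intro n hn
            rcases Nat.eq_zero_or_pos n with rfl | hpos
            · simpa [hW, hw0] using hadjP (s + 1)
            · have h1 : n ≠ 0 := by omega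
              have h2 : n + 1 ≠ 0 := by omega
              have h3 : n + 1 - 1 = (n - 1) + 1 := by omega
              simp only [hW, h1, h2, if_false, h3]
              exact hwa (n - 1) (by omega)
          have := hpur 0 (by omega)
          simp only [hW, if_pos rfl] at this
          rw [show (1 : ℕ) - 1 = 0 by rfl, if_neg (by omega : (1:ℕ) ≠ 0), hw0] at this
          exact Or.inr this
        · have dac_le : ddist G.adj a c ≤ 2 := by
            have := ddist_triangle G.strong a b c
            omega
          have dac_pos : 1 ≤ ddist G.adj a c := by
            rcases Nat.eq_zero_or_pos (ddist G.adj a c) with h0' | h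
            · have : a = c := eq_of_ddist_eq_zero G.strong h0'
              rw [← this, ddist_self] at dca
              omega
            · exact h
          have hcases2 : ddist G.adj a c = 1 ∨ ddist G.adj a c = 2 := by omega
          rcases hcases2 with dac | dac
          · -- skip circuit: contradiction with purity
            exfalso
            have hadj_ac : G.adj a c := adj_of_ddist_eq_one G.strong dac
            have hac : tdist G.adj a c = (1, q - 2) := tdist_eq_iff.mpr ⟨dac, dca⟩
            set F : ℕ → V := fun n => if n = q - 1 then P (s + 2) else P (s + 2 + n) with hF
            have hcir : IsCircuit G.adj (q - 1) F := by
              refine ⟨by omega, by simp [hF], ?_⟩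
              intro n hn
              rcases Nat.lt_or_ge n (q - 2) with h' | h'
              · have h1 : n ≠ q - 1 := by omega
                have h2 : n + 1 ≠ q - 1 := by omega
                simp only [hF, h1, h2, if_false]
                rw [show s + 2 + (n + 1) = (s + 2 + n) + 1 by omega]
                exact hadjP (s + 2 + n)
              · have hn2 : n = q - 2 := by omega
                have h1 : n ≠ q - 1 := by omega
                have h2 : n + 1 = q - 1 := by omega
                simp only [hF, h1, h2, if_false, if_pos rfl]
                rw [hn2, show s + 2 + (q - 2) = s + q by omega, hperP s]
                exact hadj_ac
            have hstart : ∃ n, n < q - 1 ∧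
                tdist G.adj (F n) (F (n + 1)) = (1, q - 1 - 1) := by
              refine ⟨q - 2, by omega, ?_⟩
              have h1 : q - 2 ≠ q - 1 := by omega
              have h2 : q - 2 + 1 = q - 1 := by omega
              simp only [hF, h1, h2, if_false, if_pos rfl]
              rw [show s + 2 + (q - 2) = s + q by omega, hperP s,
                show q - 1 - 1 = q - 2 by omega]
              exact hac
            have hall := hC.2 F hcir (by
              obtain ⟨n, hn, hh⟩ := hstart
              exact ⟨n, hn, hh⟩)
            have hkey := hall (q - 2 - s) (by omega)
            have h1 : q - 2 - s ≠ q - 1 := by omega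
            have h2 : q - 2 - s + 1 ≠ q - 1 := by omega
            simp only [hF, h1, h2, if_false] at hkey
            rw [show s + 2 + (q - 2 - s) = 0 + q by omega, hperP 0,
              show s + 2 + (q - 2 - s + 1) = 1 + q by omega, hperP 1,
              show q - 1 - 1 = q - 2 by omega, h0] at hkey
            have := (Prod.ext_iff.mp hkey).2
            simp only at this
            omega
          · -- h2-pair (a,c), previous arc h
            have hac : tdist G.adj a c = (2, q - 2) := tdist_eq_iff.mpr ⟨dac, dca⟩
            have hr : q - 2 ≤ ddist G.adj c b := by
              by_contra hr
              push_neg at hr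
              obtain ⟨v, hav, hvc⟩ := exists_of_pnum_ne_zero G (h2ih G hC hq) hac
              have hvb : tdist G.adj v b = (1, q - 1) := transfer G hC.1 hab hav
              have hbc : tdist G.adj b c = (1, q - 1) := transfer G hC.1 hvc hvb
              have := (tdist_eq_iff.mp hbc).2
              omega
            have : ddist G.adj c b = q - 2 ∨ ddist G.adj c b = q - 1 := by omega
            rcases this with h' | h'
            · exact Or.inr (tdist_eq_iff.mpr ⟨dbc, h'⟩)
            · exact Or.inl (tdist_eq_iff.mpr ⟨dbc, h'⟩)

end Main


/-- Lemma 2.5(iii): if `C(q)` exists, any circuit of length `q`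
containing an arc of type `(1,q-1)` consists of arcs of types `(1,q-1)` and `(1,q-2)`. -/
theorem stmt6 {V : Type*} [Fintype V] (G : CTWDR V) (q : ℕ) (hC : G.Cexists q)
    (f : ℕ → V) (hcir : IsCircuit G.adj q f)
    (harc : ∃ i < q, tdist G.adj (f i) (f (i + 1)) = (1, q - 1)) :
    ∀ i < q, tdist G.adj (f i) (f (i + 1)) = (1, q - 1) ∨
      tdist G.adj (f i) (f (i + 1)) = (1, q - 2) := by 
  obtain ⟨hq0, hfq, hfadj⟩ := hcir
  obtain ⟨i0, hi0, harc0⟩ := harc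
  -- q = 1 is impossible
  rcases Nat.lt_or_ge q 2 with hq1 | hq2
  · exfalso
    have : q = 1 := by omega
    subst this
    have : i0 = 0 := by omega
    subst this
    rw [hfq] at harc0
    rw [tdist_self] at harc0
    exact absurd (Prod.ext_iff.mp harc0).1 (by omega)
  -- now q ≥ 2; rotate the circuit
  have hqpos : 0 < q := by omega
  have hwrap : ∀ s, s ≤ q → f (s % q) = f s := by
    intro s hs
    rcases Nat.lt_or_ge s q with h | h
    · rw [Nat.mod_eq_of_lt h]
    · have : s = q := by omega
      subst this
      rw [Nat.mod_self, hfq]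
  set P : ℕ → V := fun t => f ((i0 + t) % q) with hP
  have hperP : ∀ t, P (t + q) = P t := by
    intro t
    simp only [hP]
    rw [show i0 + (t + q) = (i0 + t) + q by omega, Nat.add_mod_right]
  have hadjP : ∀ t, G.adj (P t) (P (t + 1)) := by
    intro t
    simp only [hP]
    have hlt : (i0 + t) % q < q := Nat.mod_lt _ hqpos
    have he : f ((i0 + (t + 1)) % q) = f ((i0 + t) % q + 1) := by
      have h1 : ((i0 + t) % q + 1) % q = ((i0 + t) + 1) % q :=
        Nat.ModEq.add_right 1 (Nat.mod_modEq (i0 + t) q)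
      rw [show i0 + (t + 1) = (i0 + t) + 1 by omega, ← h1]
      exact hwrap _ (by omega)
    rw [he]
    exact hfadj _ hlt
  have h0P : tdist G.adj (P 0) (P 1) = (1, q - 1) := by
    simp only [hP]
    rw [show i0 + 0 = i0 by omega, Nat.mod_eq_of_lt hi0]
    have : f ((i0 + 1) % q) = f (i0 + 1) := hwrap _ (by omega)
    rw [this]
    exact harc0
  have hne : ∀ t, P t ≠ P (t + 1) := by
    intro t h
    exact G.loopless (P (t + 1)) (h ▸ hadjP t)
  have claim : ∀ t, t < q → tdist G.adj (P t) (P (t + 1)) = (1, q - 1) ∨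
      tdist G.adj (P t) (P (t + 1)) = (1, q - 2) := by
    rcases Nat.lt_or_ge q 4 with hq4 | hq4
    · -- small q: 2 ≤ q ≤ 3
      intro t ht
      have fwd : ddist G.adj (P t) (P (t + 1)) = 1 := ddist_eq_one G.loopless (hadjP t)
      have rev_le : ddist G.adj (P (t + 1)) (P t) ≤ q - 1 := by
        have hw := walkP G hadjP (t + 1) (q - 1)
        rw [show t + 1 + (q - 1) = t + q by omega, hperP t] at hw
        exact ddist_le hw
      have rev_pos : 1 ≤ ddist G.adj (P (t + 1)) (P t) := by
        rcases Nat.eq_zero_or_pos (ddist G.adj (P (t + 1)) (P t)) with h0' | h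
        · exact absurd (eq_of_ddist_eq_zero G.strong h0') (hne t).symm
        · exact h
      have : ddist G.adj (P (t + 1)) (P t) = q - 1 ∨
          ddist G.adj (P (t + 1)) (P t) = q - 2 := by omega
      rcases this with h' | h'
      · exact Or.inl (tdist_eq_iff.mpr ⟨fwd, h'⟩)
      · exact Or.inr (tdist_eq_iff.mpr ⟨fwd, h'⟩)
    · exact main_lemma G hC hq4 P hadjP hperP h0P
  -- transport back to f
  intro t ht
  set t' := (t + q - i0) % q with ht'
  have ht'q : t' < q := Nat.mod_lt _ hqpos
  have e1 : (i0 + t') % q = t := by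
    have h1 : (i0 + t') % q = (i0 + (t + q - i0)) % q := by
      rw [ht']
      exact Nat.ModEq.add_left i0 (Nat.mod_modEq (t + q - i0) q)
    rw [h1, show i0 + (t + q - i0) = t + q by omega, Nat.add_mod_right, Nat.mod_eq_of_lt ht]
  have e2 : (i0 + (t' + 1)) % q = (t + 1) % q := by
    rw [show i0 + (t' + 1) = (i0 + t') + 1 by omega]
    calc ((i0 + t') + 1) % q = ((i0 + t') % q + 1) % q :=
          (Nat.ModEq.add_right 1 (Nat.mod_modEq (i0 + t') q)).symm
    _ = (t + 1) % q := by rw [e1]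
  have hPt : P t' = f t := by simp only [hP]; rw [e1]
  have hPt1 : P (t' + 1) = f (t + 1) := by
    simp only [hP]
    rw [e2]
    exact hwrap _ (by omega)
  have := claim t' ht'q
  rwa [hPt, hPt1] at this
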